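/- Let G be a finite nontrivial group acting faithfully on a finite set X. Let p be the smallest prime dividing the order of G, and let M be the cardinality of the largest orbit of the action of G on X. Then there exists a distinguishing coloring of X using at most ⌈M/(p−1)⌉ colors; in particular D_G(X) ≤ ⌈M/(p−1)⌉. -/
import Mathlib

open MulAction

/-- An enumeration of a finite subset of `X`, depending only on the set. -/
noncomputable def orbIdx {X : Type*} [Finite X] (S : Set X) (y : S) : ℕ :=
  letI := Fintype.ofFinite S
  (Fintype.equivFin S y : ℕ)

lemma orbIdx_lt {X : Type*} [Finite X] (S : Set X) (y : S) :
    orbIdx S y < Nat.card S := by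
  letI := Fintype.ofFinite S
  have h := (Fintype.equivFin S y).isLt
  rw [Nat.card_eq_fintype_card]
  exact h

lemma orbIdx_inj {X : Type*} [Finite X] (S : Set X) :
    Function.Injective (orbIdx S) := by
  letI := Fintype.ofFinite S
  intro a b h
  exact (Fintype.equivFin S).injective (Fin.val_injective h)

lemma orbIdx_congr {X : Type*} [Finite X] {S T : Set X} (h : S = T) (y : X)
    (hS : y ∈ S) (hT : y ∈ T) : orbIdx S ⟨y, hS⟩ = orbIdx T ⟨y, hT⟩ := by
  subst h; rfl

/-- Let a finite nontrivial group `G` act faithfully on a finite set `X`, let `p` be the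
smallest prime dividing `|G|`, and let `M` be the size of the largest orbit. Then there is
a distinguishing coloring of `X` with at most `⌈M / (p - 1)⌉` colors. -/
theorem distinguishing_le_ceil_maxOrbit {G X : Type*} [Group G] [Finite G] [Nontrivial G]
    [MulAction G X] [Finite X] [FaithfulSMul G X]
    (p : ℕ) (hp : p.Prime ∧ p ∣ Nat.card G ∧
      ∀ q : ℕ, q.Prime → q ∣ Nat.card G → p ≤ q)
    (M : ℕ) (hM : IsGreatest {m : ℕ | ∃ x : X, Nat.card (MulAction.orbit G x) = m} M) :
    ∃ c : X → Fin (M ⌈/⌉ (p - 1)), ∀ g : G, (∀ x : X, c (g • x) = c x) → g = 1 := by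
  obtain ⟨hpp, hpG, hmin⟩ := hp
  set k := p - 1 with hk
  have hk0 : 0 < k := by
    have := hpp.two_le; omega
  -- each orbit has size at most M
  have horb_le : ∀ x : X, Nat.card (orbit G x) ≤ M := fun x => hM.2 ⟨x, rfl⟩
  -- the coloring
  have hbound : ∀ x : X,
      orbIdx (orbit G x) ⟨x, mem_orbit_self x⟩ / k < M ⌈/⌉ k := by
    intro x
    have h1 : orbIdx (orbit G x) ⟨x, mem_orbit_self x⟩ < M :=
      lt_of_lt_of_le (orbIdx_lt _ _) (horb_le x)
    have h2 : M ≤ k * (M ⌈/⌉ k) := le_smul_ceilDiv hk0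
    rw [Nat.div_lt_iff_lt_mul hk0]
    calc orbIdx (orbit G x) ⟨x, mem_orbit_self x⟩ < M := h1
      _ ≤ k * (M ⌈/⌉ k) := h2
      _ = (M ⌈/⌉ k) * k := Nat.mul_comm _ _
  refine ⟨fun x => ⟨orbIdx (orbit G x) ⟨x, mem_orbit_self x⟩ / k, hbound x⟩, ?_⟩
  intro g hpres
  by_contra hg
  -- pass to an element of prime order q ≥ p
  have hordg : orderOf g ≠ 1 := fun h => hg (orderOf_eq_one_iff.mp h)
  have hordg0 : orderOf g ≠ 0 := (orderOf_pos g).ne'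
  set q := (orderOf g).minFac with hq
  have hqp : q.Prime := Nat.minFac_prime hordg
  have hqdvd : q ∣ orderOf g := Nat.minFac_dvd _
  have hqG : q ∣ Nat.card G := hqdvd.trans (orderOf_dvd_natCard g)
  have hpq : p ≤ q := hmin q hqp hqG
  set h : G := g ^ (orderOf g / q) with hh
  have hordh : orderOf h = q := orderOf_pow_orderOf_div hordg0 hqdvd
  have hh1 : h ≠ 1 := by
    intro e
    rw [e, orderOf_one] at hordh
    exact hqp.one_lt.ne hordh
  -- powers of g preserve the coloring
  have hpow : ∀ (m : ℕ) (x : X),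
      (orbIdx (orbit G (g ^ m • x)) ⟨g ^ m • x, mem_orbit_self _⟩ / k : ℕ) =
        orbIdx (orbit G x) ⟨x, mem_orbit_self x⟩ / k := by
    intro m
    induction m with
    | zero =>
        intro x
        simp only [pow_zero, one_smul]
        exact congrArg (· / k) (orbIdx_congr (by rw [pow_zero, one_smul]) x _ _)
    | succ m ih =>
        intro x
        have : g ^ (m + 1) • x = g • (g ^ m • x) := by
          rw [pow_succ', mul_smul]
        rw [this]
        have := congrArg Fin.val (hpres (g ^ m • x))
        simpa using this.trans (congrArg (· ) (ih x))
  have hpresh : ∀ x : X,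
      (orbIdx (orbit G (h • x)) ⟨h • x, mem_orbit_self _⟩ / k : ℕ) =
        orbIdx (orbit G x) ⟨x, mem_orbit_self x⟩ / k := fun x => hpow _ x
  -- h moves some point
  have hmove : ∃ x : X, h • x ≠ x := by
    by_contra hc
    push_neg at hc
    exact hh1 (FaithfulSMul.eq_of_smul_eq_smul (fun x : X => by rw [hc x, one_smul]))
  obtain ⟨x, hx⟩ := hmove
  -- the period of x under h is exactly q
  have hper : period h x = q := by
    have hdvd : period h x ∣ q := hordh ▸ period_dvd_orderOf h x
    rcases (Nat.dvd_prime hqp).mp hdvd with h1 | h1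
    · exact absurd (period_eq_one_iff.mp h1) hx
    · exact h1
  set S : Set X := orbit G x with hS
  set t : ℕ := orbIdx S ⟨x, mem_orbit_self x⟩ / k with ht
  -- the map i ↦ index of h^i • x
  have hmem : ∀ i : ℕ, h ^ i • x ∈ S := fun i => mem_orbit x (h ^ i)
  set F : Fin q → ℕ := fun i => orbIdx S ⟨h ^ (i : ℕ) • x, hmem i⟩ with hF
  -- F is injective
  have hsmul_inj : ∀ i j : Fin q, h ^ (i : ℕ) • x = h ^ (j : ℕ) • x → i = j := by
    have key : ∀ i j : Fin q, (i : ℕ) ≤ (j : ℕ) →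
        h ^ (i : ℕ) • x = h ^ (j : ℕ) • x → i = j := by
      intro i j hij he
      obtain ⟨d, hd⟩ := Nat.le.dest hij
      have : h ^ (i : ℕ) • (h ^ d • x) = h ^ (i : ℕ) • x := by
        rw [← mul_smul, ← pow_add, hd, he]
      have hdx : h ^ d • x = x := smul_left_cancel _ this
      have hdvd : period h x ∣ d := pow_smul_eq_iff_period_dvd.mp hdx
      rw [hper] at hdvd
      have hdlt : d < q := by omega
      have : d = 0 := Nat.eq_zero_of_dvd_of_lt hdvd hdlt
      omega
    intro i j he
    rcases le_total (i : ℕ) (j : ℕ) with hle | hle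
    · exact key i j hle he
    · exact (key j i hle he.symm).symm
  have hFinj : Function.Injective F := by
    intro i j he
    have := orbIdx_inj S he
    exact hsmul_inj i j (congrArg Subtype.val this)
  -- each F i lies in Ico (t*k) (t*k + k)
  have hFval : ∀ i : Fin q, F i / k = t := by
    intro i
    have := hpow (orderOf g / q * (i : ℕ)) x
    rw [pow_mul, ← hh] at this
    have horb : orbit G (h ^ (i : ℕ) • x) = S := orbit_smul _ _
    calc F i / k = orbIdx (orbit G (h ^ (i : ℕ) • x))
          ⟨h ^ (i : ℕ) • x, mem_orbit_self _⟩ / k := by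
            rw [hF]
            exact congrArg (· / k) (orbIdx_congr horb.symm _ _ _)
      _ = t := this
  have hFmem : ∀ i : Fin q, F i ∈ Finset.Ico (t * k) (t * k + k) := by
    intro i
    have hv := hFval i
    rw [Finset.mem_Ico]
    constructor
    · calc t * k = F i / k * k := by rw [hv]
        _ ≤ F i := Nat.div_mul_le_self _ _
    · have h1 : F i / k < t + 1 := by omega
      have h2 : F i < (t + 1) * k := (Nat.div_lt_iff_lt_mul hk0).mp h1
      have h3 : (t + 1) * k = t * k + k := by ring
      omega
  -- counting: q ≤ k = p - 1 < p ≤ q, contradiction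
  have hcard : q ≤ k := by
    have := Finset.card_le_card_of_injOn (s := (Finset.univ : Finset (Fin q))) F (fun i _ => hFmem i)
      (fun i _ j _ hij => hFinj hij)
    simpa using this
  have := hpp.two_le
  omega
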